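/- Let Z be an s×q random matrix with i.i.d. standard normal entries, V a q×q symmetric matrix, and x ∈ ℝ^s a unit vector. Then E[(xᵀ Z V Zᵀ x)²] ≤ tr(V)² + 2‖V‖_F² + 3 Σ_j V_{jj}² · Σ_i x_i⁴ ≤ tr(V)² + 2‖V‖_F² + 3‖V‖_F², and in particular E[(xᵀ Z V Zᵀ x)²] ≤ tr(V)² + 5‖V‖_F². -/

import Mathlib

open MeasureTheory ProbabilityTheory Real
open scoped ENNReal NNReal

lemma gaussPDF_eq (x : ℝ) :
    gaussianPDFReal 0 1 x = (√(2 * π))⁻¹ * rexp (-(1/2) * x ^ 2) := by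
  simp only [gaussianPDFReal, NNReal.coe_one, mul_one, sub_zero]
  ring_nf

lemma integrable_pow_mul_pdf (n : ℕ) :
    Integrable (fun x : ℝ => x ^ n * gaussianPDFReal 0 1 x) := by
  have h : Integrable (fun x : ℝ => x ^ (n : ℝ) * rexp (-(1/2) * x ^ 2)) :=
    integrable_rpow_mul_exp_neg_mul_sq (by norm_num)
      ((by norm_num : (-1:ℝ) < 0).trans_le (Nat.cast_nonneg n))
  have h2 : Integrable (fun x : ℝ => (√(2 * π))⁻¹ * (x ^ n * rexp (-(1/2) * x ^ 2))) := by
    refine Integrable.const_mul ?_ _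
    simpa [Real.rpow_natCast] using h
  refine h2.congr ?_
  filter_upwards with x
  rw [gaussPDF_eq]; ring

lemma gaussReal_eq : gaussianReal 0 1
    = (volume : Measure ℝ).withDensity (fun x => ((gaussianPDFReal 0 1 x).toNNReal : ℝ≥0∞)) := by
  rw [gaussianReal_of_var_ne_zero _ one_ne_zero]
  rfl

lemma integrable_pow_gauss (n : ℕ) :
    Integrable (fun y : ℝ => y ^ n) (gaussianReal 0 1) := by
  rw [gaussReal_eq]
  rw [integrable_withDensity_iff (((measurable_gaussianPDFReal 0 1).real_toNNReal).coe_nnreal_ennreal)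
    (Filter.Eventually.of_forall fun x => ENNReal.coe_lt_top)]
  refine (integrable_pow_mul_pdf n).congr ?_
  filter_upwards with x
  rw [ENNReal.coe_toReal, Real.coe_toNNReal _ (gaussianPDFReal_nonneg _ _ _)]

lemma integral_pow_gauss (n : ℕ) :
    ∫ y, y ^ n ∂(gaussianReal 0 1) = ∫ x, x ^ n * gaussianPDFReal 0 1 x := by
  rw [gaussReal_eq]
  rw [integral_withDensity_eq_integral_smul ((measurable_gaussianPDFReal 0 1).real_toNNReal)]
  congr 1; funext x
  rw [NNReal.smul_def, Real.coe_toNNReal _ (gaussianPDFReal_nonneg _ _ _), smul_eq_mul]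
  ring

lemma integral_odd_pow_gauss (n : ℕ) (hn : Odd n) :
    ∫ y, y ^ n ∂(gaussianReal 0 1) = 0 := by
  rw [integral_pow_gauss]
  have key : ∫ x, x ^ n * gaussianPDFReal 0 1 x
      = ∫ x, (-x) ^ n * gaussianPDFReal 0 1 (-x) :=
    (integral_neg_eq_self (fun x => x ^ n * gaussianPDFReal 0 1 x) volume).symm
  have h2 : ∀ x : ℝ, (-x) ^ n * gaussianPDFReal 0 1 (-x) = -(x ^ n * gaussianPDFReal 0 1 x) := by
    intro x
    rw [hn.neg_pow, gaussPDF_eq, gaussPDF_eq]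
    ring_nf
  simp_rw [h2] at key
  rw [integral_neg] at key
  linarith

lemma integral_even_pow_gauss (n : ℕ) :
    ∫ y, y ^ (2 * n) ∂(gaussianReal 0 1)
      = (√(2 * π))⁻¹ * (2 * ∫ x in Set.Ioi (0:ℝ), x ^ (2 * n) * rexp (-(1/2) * x ^ 2)) := by
  rw [integral_pow_gauss]
  rw [← integral_comp_abs (f := fun t : ℝ => t ^ (2*n) * rexp (-(1/2) * t ^ 2)),
    ← integral_const_mul]
  congr 1; funext x
  rw [gaussPDF_eq, pow_mul, pow_mul, sq_abs]
  ring

lemma integral_Ioi_pow_exp (n : ℕ) :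
    ∫ x in Set.Ioi (0:ℝ), x ^ n * rexp (-(1/2) * x ^ 2)
      = ((1:ℝ)/2) ^ (-((n:ℝ) + 1) / 2) * (1 / 2) * Real.Gamma (((n:ℝ) + 1) / 2) := by
  have := integral_rpow_mul_exp_neg_mul_rpow (p := 2) (q := (n:ℝ)) (b := 1/2)
    (by norm_num) ((by norm_num : (-1:ℝ) < 0).trans_le (Nat.cast_nonneg n)) (by norm_num)
  rw [← this]
  refine setIntegral_congr_fun measurableSet_Ioi (fun y hy => ?_)
  rw [Real.rpow_natCast, Real.rpow_two]

lemma rpow_half_aux : ((1:ℝ)/2) ^ (-((3:ℝ) / 2)) = 2 * √2 ∧ ((1:ℝ)/2) ^ (-((5:ℝ) / 2)) = 4 * √2 := by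
  have h1 : ((1:ℝ)/2) = 2⁻¹ := by norm_num
  have key : ∀ y : ℝ, ((1:ℝ)/2) ^ (-y) = 2 ^ y := by
    intro y
    rw [h1, Real.inv_rpow (by norm_num), ← Real.rpow_neg (by norm_num), neg_neg]
  constructor
  · rw [key,
      show ((3:ℝ)/2) = 1 + 1/2 by norm_num, Real.rpow_add (by norm_num), Real.rpow_one,
      ← Real.sqrt_eq_rpow]
  · rw [key,
      show ((5:ℝ)/2) = 2 + 1/2 by norm_num, Real.rpow_add (by norm_num),
      ← Real.sqrt_eq_rpow, show ((2:ℝ) ^ (2:ℝ)) = 4 by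
        rw [show ((2:ℝ):ℝ) = ((2:ℕ):ℝ) by norm_num, Real.rpow_natCast]; norm_num]

lemma Gamma_32 : Real.Gamma (3/2) = √π / 2 := by
  rw [show (3/2:ℝ) = 1/2 + 1 by norm_num, Real.Gamma_add_one (by norm_num),
    Real.Gamma_one_half_eq]; ring

lemma Gamma_52 : Real.Gamma (5/2) = 3 * √π / 4 := by
  rw [show (5/2:ℝ) = 3/2 + 1 by norm_num, Real.Gamma_add_one (by norm_num), Gamma_32]; ring

lemma integral_sq_gauss : ∫ y, y ^ 2 ∂(gaussianReal 0 1) = 1 := by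
  have h := integral_Ioi_pow_exp 2
  have h2 := integral_even_pow_gauss 1
  norm_num at h h2 ⊢
  rw [h] at h2
  rw [h2, rpow_half_aux.1, Gamma_32]
  have hπ : √π ≠ 0 := by positivity
  have h2' : √2 ≠ 0 := by positivity
  field_simp

lemma integral_fourth_gauss : ∫ y, y ^ 4 ∂(gaussianReal 0 1) = 3 := by
  have h := integral_Ioi_pow_exp 4
  have h2 := integral_even_pow_gauss 2
  norm_num at h h2 ⊢
  rw [h] at h2
  rw [h2, rpow_half_aux.2, Gamma_52]
  have hπ : √π ≠ 0 := by positivity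
  have h2' : √2 ≠ 0 := by positivity
  field_simp

lemma integral_one_pow_gauss : ∫ y, y ^ 1 ∂(gaussianReal 0 1) = 0 :=
  integral_odd_pow_gauss 1 ⟨0, by norm_num⟩

lemma integral_three_pow_gauss : ∫ y, y ^ 3 ∂(gaussianReal 0 1) = 0 :=
  integral_odd_pow_gauss 3 ⟨1, by norm_num⟩

set_option linter.unusedSectionVars false
set_option linter.unusedVariables false
open Matrix
section RV

variable {Ω : Type*} [MeasureSpace Ω] [IsProbabilityMeasure (ℙ : Measure Ω)]
  {ι : Type*} {Z : ι → Ω → ℝ}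

lemma momZ_eq (hmeas : ∀ i, Measurable (Z i))
    (hdist : ∀ i, Measure.map (Z i) (ℙ : Measure Ω) = gaussianReal 0 1) (a : ι) (n : ℕ) :
    ∫ ω, Z a ω ^ n ∂(ℙ : Measure Ω) = ∫ y, y ^ n ∂(gaussianReal 0 1) := by
  rw [← hdist a]
  exact (integral_map (φ := Z a) (f := fun y => y ^ n) (hmeas a).aemeasurable
    (measurable_id.pow_const n).aestronglyMeasurable).symm

lemma intZ (hmeas : ∀ i, Measurable (Z i))
    (hdist : ∀ i, Measure.map (Z i) (ℙ : Measure Ω) = gaussianReal 0 1) (a : ι) (n : ℕ) :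
    Integrable (fun ω => Z a ω ^ n) (ℙ : Measure Ω) := by
  have h := integrable_pow_gauss n
  rw [← hdist a] at h
  exact (integrable_map_measure (measurable_id.pow_const n).aestronglyMeasurable
    (hmeas a).aemeasurable).mp h

variable (hmeas : ∀ i, Measurable (Z i))
  (hindep : iIndepFun Z (ℙ : Measure Ω))
  (hdist : ∀ i, Measure.map (Z i) (ℙ : Measure Ω) = gaussianReal 0 1)

include hmeas hindep hdist

lemma ind2 (a b : ι) (hab : a ≠ b) (m n : ℕ) :
    IndepFun (fun ω => Z a ω ^ m) (fun ω => Z b ω ^ n) (ℙ : Measure Ω) :=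
  (hindep.indepFun hab).comp (measurable_id.pow_const m) (measurable_id.pow_const n)

lemma E2int (a b : ι) (hab : a ≠ b) (m n : ℕ) :
    Integrable (fun ω => Z a ω ^ m * Z b ω ^ n) (ℙ : Measure Ω) :=
  (ind2 hmeas hindep hdist a b hab m n).integrable_mul
    (intZ hmeas hdist a m) (intZ hmeas hdist b n)

lemma E2 (a b : ι) (hab : a ≠ b) (m n : ℕ) :
    ∫ ω, Z a ω ^ m * Z b ω ^ n ∂(ℙ : Measure Ω)
      = (∫ y, y ^ m ∂(gaussianReal 0 1)) * ∫ y, y ^ n ∂(gaussianReal 0 1) := by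
  rw [← momZ_eq hmeas hdist a m, ← momZ_eq hmeas hdist b n]
  exact (ind2 hmeas hindep hdist a b hab m n).integral_fun_mul_eq_mul_integral
    ((hmeas a).pow_const m).aestronglyMeasurable ((hmeas b).pow_const n).aestronglyMeasurable

lemma ind3 (a b c : ι) (hac : a ≠ c) (hbc : b ≠ c) (m n k : ℕ) :
    IndepFun (fun ω => Z a ω ^ m * Z b ω ^ n) (fun ω => Z c ω ^ k) (ℙ : Measure Ω) := by
  have h := hindep.indepFun_prodMk hmeas a b c hac hbc
  exact h.comp (φ := fun p : ℝ × ℝ => p.1 ^ m * p.2 ^ n)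
    ((measurable_fst.pow_const m).mul (measurable_snd.pow_const n)) (measurable_id.pow_const k)

lemma E3int (a b c : ι) (hab : a ≠ b) (hac : a ≠ c) (hbc : b ≠ c) (m n k : ℕ) :
    Integrable (fun ω => Z a ω ^ m * Z b ω ^ n * Z c ω ^ k) (ℙ : Measure Ω) :=
  (ind3 hmeas hindep hdist a b c hac hbc m n k).integrable_mul
    (E2int hmeas hindep hdist a b hab m n) (intZ hmeas hdist c k)

lemma E3 (a b c : ι) (hab : a ≠ b) (hac : a ≠ c) (hbc : b ≠ c) (m n k : ℕ) :
    ∫ ω, Z a ω ^ m * Z b ω ^ n * Z c ω ^ k ∂(ℙ : Measure Ω)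
      = (∫ y, y ^ m ∂(gaussianReal 0 1)) * (∫ y, y ^ n ∂(gaussianReal 0 1))
        * ∫ y, y ^ k ∂(gaussianReal 0 1) := by
  rw [← momZ_eq hmeas hdist c k, ← E2 hmeas hindep hdist a b hab m n]
  exact (ind3 hmeas hindep hdist a b c hac hbc m n k).integral_fun_mul_eq_mul_integral
    (((hmeas a).pow_const m).mul ((hmeas b).pow_const n)).aestronglyMeasurable
    ((hmeas c).pow_const k).aestronglyMeasurable

lemma ind4 (a b c d : ι) (hac : a ≠ c) (had : a ≠ d) (hbc : b ≠ c) (hbd : b ≠ d) :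
    IndepFun (fun ω => Z a ω * Z b ω) (fun ω => Z c ω * Z d ω) (ℙ : Measure Ω) :=
  hindep.indepFun_mul_mul hmeas a b c d hac had hbc hbd

lemma E4int (a b c d : ι) (hab : a ≠ b) (hac : a ≠ c) (had : a ≠ d) (hbc : b ≠ c)
    (hbd : b ≠ d) (hcd : c ≠ d) :
    Integrable (fun ω => Z a ω * Z b ω * (Z c ω * Z d ω)) (ℙ : Measure Ω) := by
  have h1 : Integrable (fun ω => Z a ω * Z b ω) (ℙ : Measure Ω) := by
    simpa using E2int hmeas hindep hdist a b hab 1 1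
  have h2 : Integrable (fun ω => Z c ω * Z d ω) (ℙ : Measure Ω) := by
    simpa using E2int hmeas hindep hdist c d hcd 1 1
  exact (ind4 hmeas hindep hdist a b c d hac had hbc hbd).integrable_mul h1 h2

lemma E4 (a b c d : ι) (hab : a ≠ b) (hac : a ≠ c) (had : a ≠ d) (hbc : b ≠ c)
    (hbd : b ≠ d) (hcd : c ≠ d) :
    ∫ ω, Z a ω * Z b ω * (Z c ω * Z d ω) ∂(ℙ : Measure Ω) = 0 := by
  have h := (ind4 hmeas hindep hdist a b c d hac had hbc hbd).integral_fun_mul_eq_mul_integral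
    ((hmeas a).mul (hmeas b)).aestronglyMeasurable
    ((hmeas c).mul (hmeas d)).aestronglyMeasurable
  have h0 : ∫ y, (y:ℝ) ∂(gaussianReal 0 1) = 0 := by
    simpa using integral_one_pow_gauss
  have h1 : ∫ ω, Z a ω * Z b ω ∂(ℙ : Measure Ω) = 0 := by
    have h2 := E2 hmeas hindep hdist a b hab 1 1
    simp only [pow_one] at h2
    rw [h2, h0, mul_zero]
  calc ∫ ω, Z a ω * Z b ω * (Z c ω * Z d ω) ∂(ℙ : Measure Ω)
      = (∫ ω, Z a ω * Z b ω ∂(ℙ : Measure Ω)) * ∫ ω, Z c ω * Z d ω ∂(ℙ : Measure Ω) := h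
    _ = 0 := by rw [h1, zero_mul]


lemma wick [DecidableEq ι] (u v w t : ι) :
    Integrable (fun ω => Z u ω * Z v ω * Z w ω * Z t ω) (ℙ : Measure Ω) ∧
    ∫ ω, Z u ω * Z v ω * Z w ω * Z t ω ∂(ℙ : Measure Ω)
      = (if u = v then (1:ℝ) else 0) * (if w = t then 1 else 0)
      + (if u = w then (1:ℝ) else 0) * (if v = t then 1 else 0)
      + (if u = t then (1:ℝ) else 0) * (if v = w then 1 else 0) := by
  have g1 : ∫ y, y ^ 1 ∂(gaussianReal 0 1) = 0 := integral_one_pow_gauss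
  have g2 : ∫ y, y ^ 2 ∂(gaussianReal 0 1) = 1 := integral_sq_gauss
  have g3 : ∫ y, y ^ 3 ∂(gaussianReal 0 1) = 0 := integral_three_pow_gauss
  have g4 : ∫ y, y ^ 4 ∂(gaussianReal 0 1) = 3 := integral_fourth_gauss
  by_cases h1 : u = v
  · subst h1
    by_cases h2 : u = w
    · subst h2
      by_cases h3 : u = t
      · subst h3
        have hf : (fun ω => Z u ω * Z u ω * Z u ω * Z u ω) = fun ω => Z u ω ^ 4 := by
          funext ω; ring
        refine ⟨hf ▸ intZ hmeas hdist u 4, ?_⟩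
        rw [hf, momZ_eq hmeas hdist u 4, g4]
        simp only [if_pos rfl]
        norm_num
      · have hf : (fun ω => Z u ω * Z u ω * Z u ω * Z t ω)
            = fun ω => Z u ω ^ 3 * Z t ω ^ 1 := by funext ω; ring
        refine ⟨hf ▸ E2int hmeas hindep hdist u t h3 3 1, ?_⟩
        rw [hf, E2 hmeas hindep hdist u t h3 3 1, g3, g1]
        simp [h3]
    · by_cases h3 : u = t
      · subst h3
        have hf : (fun ω => Z u ω * Z u ω * Z w ω * Z u ω)
            = fun ω => Z u ω ^ 3 * Z w ω ^ 1 := by funext ω; ring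
        refine ⟨hf ▸ E2int hmeas hindep hdist u w h2 3 1, ?_⟩
        rw [hf, E2 hmeas hindep hdist u w h2 3 1, g3, g1]
        simp [h2, Ne.symm h2]
      · by_cases h4 : w = t
        · subst h4
          have hf : (fun ω => Z u ω * Z u ω * Z w ω * Z w ω)
              = fun ω => Z u ω ^ 2 * Z w ω ^ 2 := by funext ω; ring
          refine ⟨hf ▸ E2int hmeas hindep hdist u w h2 2 2, ?_⟩
          rw [hf, E2 hmeas hindep hdist u w h2 2 2, g2]
          simp [h2]
        · have hf : (fun ω => Z u ω * Z u ω * Z w ω * Z t ω)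
              = fun ω => Z u ω ^ 2 * Z w ω ^ 1 * Z t ω ^ 1 := by funext ω; ring
          refine ⟨hf ▸ E3int hmeas hindep hdist u w t h2 h3 h4 2 1 1, ?_⟩
          rw [hf, E3 hmeas hindep hdist u w t h2 h3 h4 2 1 1, g2, g1]
          simp [h2, h3, h4]
  · by_cases h2 : u = w
    · subst h2
      by_cases h3 : u = t
      · subst h3
        have hf : (fun ω => Z u ω * Z v ω * Z u ω * Z u ω)
            = fun ω => Z u ω ^ 3 * Z v ω ^ 1 := by funext ω; ring
        refine ⟨hf ▸ E2int hmeas hindep hdist u v h1 3 1, ?_⟩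
        rw [hf, E2 hmeas hindep hdist u v h1 3 1, g3, g1]
        simp [h1, Ne.symm h1]
      · by_cases h4 : v = t
        · subst h4
          have hf : (fun ω => Z u ω * Z v ω * Z u ω * Z v ω)
              = fun ω => Z u ω ^ 2 * Z v ω ^ 2 := by funext ω; ring
          refine ⟨hf ▸ E2int hmeas hindep hdist u v h1 2 2, ?_⟩
          rw [hf, E2 hmeas hindep hdist u v h1 2 2, g2]
          simp [h1, h3]
        · have hf : (fun ω => Z u ω * Z v ω * Z u ω * Z t ω)
              = fun ω => Z u ω ^ 2 * Z v ω ^ 1 * Z t ω ^ 1 := by funext ω; ring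
          refine ⟨hf ▸ E3int hmeas hindep hdist u v t h1 h3 h4 2 1 1, ?_⟩
          rw [hf, E3 hmeas hindep hdist u v t h1 h3 h4 2 1 1, g2, g1]
          simp [h1, h3, h4]
    · by_cases h3 : u = t
      · subst h3
        by_cases h4 : v = w
        · subst h4
          have hf : (fun ω => Z u ω * Z v ω * Z v ω * Z u ω)
              = fun ω => Z u ω ^ 2 * Z v ω ^ 2 := by funext ω; ring
          refine ⟨hf ▸ E2int hmeas hindep hdist u v h1 2 2, ?_⟩
          rw [hf, E2 hmeas hindep hdist u v h1 2 2, g2]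
          simp [h1, h2]
        · have hf : (fun ω => Z u ω * Z v ω * Z w ω * Z u ω)
              = fun ω => Z u ω ^ 2 * Z v ω ^ 1 * Z w ω ^ 1 := by funext ω; ring
          refine ⟨hf ▸ E3int hmeas hindep hdist u v w h1 h2 h4 2 1 1, ?_⟩
          rw [hf, E3 hmeas hindep hdist u v w h1 h2 h4 2 1 1, g2, g1]
          simp [h1, h2, h4]
      · by_cases h4 : v = w
        · subst h4
          by_cases h5 : v = t
          · subst h5
            have hf : (fun ω => Z u ω * Z v ω * Z v ω * Z v ω)
                = fun ω => Z v ω ^ 3 * Z u ω ^ 1 := by funext ω; ring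
            refine ⟨hf ▸ E2int hmeas hindep hdist v u (Ne.symm h1) 3 1, ?_⟩
            rw [hf, E2 hmeas hindep hdist v u (Ne.symm h1) 3 1, g3, g1]
            simp [h1]
          · have hf : (fun ω => Z u ω * Z v ω * Z v ω * Z t ω)
                = fun ω => Z v ω ^ 2 * Z u ω ^ 1 * Z t ω ^ 1 := by funext ω; ring
            refine ⟨hf ▸ E3int hmeas hindep hdist v u t (Ne.symm h1) h5 h3 2 1 1, ?_⟩
            rw [hf, E3 hmeas hindep hdist v u t (Ne.symm h1) h5 h3 2 1 1, g2, g1]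
            simp [h1, h3, h5]
        · by_cases h5 : v = t
          · subst h5
            have hf : (fun ω => Z u ω * Z v ω * Z w ω * Z v ω)
                = fun ω => Z v ω ^ 2 * Z u ω ^ 1 * Z w ω ^ 1 := by funext ω; ring
            refine ⟨hf ▸ E3int hmeas hindep hdist v u w (Ne.symm h1) h4 h2 2 1 1, ?_⟩
            rw [hf, E3 hmeas hindep hdist v u w (Ne.symm h1) h4 h2 2 1 1, g2, g1]
            simp [h1, h2, h4]
          · by_cases h6 : w = t
            · subst h6
              have hf : (fun ω => Z u ω * Z v ω * Z w ω * Z w ω)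
                  = fun ω => Z w ω ^ 2 * Z u ω ^ 1 * Z v ω ^ 1 := by funext ω; ring
              refine ⟨hf ▸ E3int hmeas hindep hdist w u v (Ne.symm h2) (Ne.symm h4) h1 2 1 1, ?_⟩
              rw [hf, E3 hmeas hindep hdist w u v (Ne.symm h2) (Ne.symm h4) h1 2 1 1, g2, g1]
              simp [h1, h2, h4]
            · have hf : (fun ω => Z u ω * Z v ω * Z w ω * Z t ω)
                  = fun ω => Z u ω * Z v ω * (Z w ω * Z t ω) := by funext ω; ring
              refine ⟨hf ▸ E4int hmeas hindep hdist u v w t h1 h2 h3 h4 h5 h6, ?_⟩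
              rw [hf, E4 hmeas hindep hdist u v w t h1 h2 h3 h4 h5 h6]
              simp [h1, h2, h3, h4, h5, h6]

end RV

section Alg
open Matrix
variable {s q : ℕ} (V : Matrix (Fin q) (Fin q) ℝ) (x : Fin s → ℝ)

lemma alg_diag :
    ∑ p : (Fin s × Fin q) × (Fin s × Fin q),
        (x p.1.1 * V p.1.2 p.2.2 * x p.2.1) * (if p.1 = p.2 then (1:ℝ) else 0)
      = (∑ i, x i ^ 2) * V.trace := by
  rw [Fintype.sum_prod_type]
  simp only [mul_ite, mul_one, mul_zero, Finset.sum_ite_eq, Finset.mem_univ, if_true]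
  rw [Fintype.sum_prod_type]
  have h : ∀ i j, x i * V j j * x i = x i ^ 2 * V j j := fun i j => by ring
  simp_rw [h]
  rw [← Finset.sum_mul_sum Finset.univ Finset.univ (fun i => x i ^ 2) (fun j => V j j)]
  simp [Matrix.trace, Matrix.diag]

lemma alg_sq :
    ∑ p : (Fin s × Fin q) × (Fin s × Fin q),
        (x p.1.1 * V p.1.2 p.2.2 * x p.2.1) * (x p.1.1 * V p.1.2 p.2.2 * x p.2.1)
      = (∑ i, x i ^ 2) * (∑ i, x i ^ 2) * (∑ j₁, ∑ j₂, V j₁ j₂ ^ 2) := by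
  simp only [Fintype.sum_prod_type]
  rw [Finset.sum_mul_sum Finset.univ Finset.univ (fun i => x i ^ 2) (fun i => x i ^ 2)]
  simp only [Finset.sum_mul, Finset.mul_sum]
  rw [Finset.sum_comm]
  conv_lhs => enter [2, j1, 2, i1]; rw [Finset.sum_comm]
  conv_lhs => enter [2, j1]; rw [Finset.sum_comm]
  exact Finset.sum_congr rfl fun j1 _ => Finset.sum_congr rfl fun j2 _ =>
    Finset.sum_congr rfl fun i1 _ => Finset.sum_congr rfl fun i2 _ => by ring

lemma alg_sym (hV : V.IsSymm) :
    ∑ p : (Fin s × Fin q) × (Fin s × Fin q),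
        (x p.1.1 * V p.1.2 p.2.2 * x p.2.1) * (x p.2.1 * V p.2.2 p.1.2 * x p.1.1)
      = (∑ i, x i ^ 2) * (∑ i, x i ^ 2) * (∑ j₁, ∑ j₂, V j₁ j₂ ^ 2) := by
  have hsym : ∀ j₁ j₂, V j₂ j₁ = V j₁ j₂ := fun j₁ j₂ => by
    conv_lhs => rw [← hV]
    rfl
  simp only [Fintype.sum_prod_type]
  rw [Finset.sum_mul_sum Finset.univ Finset.univ (fun i => x i ^ 2) (fun i => x i ^ 2)]
  simp only [Finset.sum_mul, Finset.mul_sum]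
  rw [Finset.sum_comm]
  conv_lhs => enter [2, j1, 2, i1]; rw [Finset.sum_comm]
  conv_lhs => enter [2, j1]; rw [Finset.sum_comm]
  refine Finset.sum_congr rfl fun j1 _ => Finset.sum_congr rfl fun j2 _ =>
    Finset.sum_congr rfl fun i1 _ => Finset.sum_congr rfl fun i2 _ => ?_
  rw [hsym j1 j2]
  ring

end Alg

section Main
open Matrix

/-- For `Z` an `s × q` matrix with i.i.d. standard normal entries, `V` symmetric, and a unit
vector `x`: `E[(xᵀ Z V Zᵀ x)²] ≤ tr(V)² + 2‖V‖_F² + 3 Σ_j V_{jj}² · Σ_i x_i⁴`, which is at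
most `tr(V)² + 2‖V‖_F² + 3‖V‖_F²`; in particular `E[(xᵀ Z V Zᵀ x)²] ≤ tr(V)² + 5‖V‖_F²`. -/
theorem gaussian_quadform_unitvec_second_moment
    {Ω : Type*} [MeasureSpace Ω] [IsProbabilityMeasure (ℙ : Measure Ω)]
    {s q : ℕ} (Z : Fin s × Fin q → Ω → ℝ)
    (hmeas : ∀ i, Measurable (Z i))
    (hindep : iIndepFun Z (ℙ : Measure Ω))
    (hdist : ∀ i, Measure.map (Z i) (ℙ : Measure Ω) = gaussianReal 0 1)
    (V : Matrix (Fin q) (Fin q) ℝ) (hV : V.IsSymm)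
    (x : Fin s → ℝ) (hx : ∑ i, (x i) ^ 2 = 1) :
    (∫ ω, (∑ i₁, ∑ i₂, ∑ j₁, ∑ j₂,
        x i₁ * Z (i₁, j₁) ω * V j₁ j₂ * Z (i₂, j₂) ω * x i₂) ^ 2 ∂(ℙ : Measure Ω))
      ≤ V.trace ^ 2 + 2 * (∑ j₁, ∑ j₂, (V j₁ j₂) ^ 2)
          + 3 * (∑ j, (V j j) ^ 2) * (∑ i, (x i) ^ 4)
    ∧ V.trace ^ 2 + 2 * (∑ j₁, ∑ j₂, (V j₁ j₂) ^ 2)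
          + 3 * (∑ j, (V j j) ^ 2) * (∑ i, (x i) ^ 4)
        ≤ V.trace ^ 2 + 2 * (∑ j₁, ∑ j₂, (V j₁ j₂) ^ 2) + 3 * (∑ j₁, ∑ j₂, (V j₁ j₂) ^ 2)
    ∧ (∫ ω, (∑ i₁, ∑ i₂, ∑ j₁, ∑ j₂,
        x i₁ * Z (i₁, j₁) ω * V j₁ j₂ * Z (i₂, j₂) ω * x i₂) ^ 2 ∂(ℙ : Measure Ω))
      ≤ V.trace ^ 2 + 5 * (∑ j₁, ∑ j₂, (V j₁ j₂) ^ 2) := by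
  classical
  have hS : ∀ ω, (∑ i₁, ∑ i₂, ∑ j₁, ∑ j₂,
        x i₁ * Z (i₁, j₁) ω * V j₁ j₂ * Z (i₂, j₂) ω * x i₂)
      = ∑ p : (Fin s × Fin q) × (Fin s × Fin q),
          (x p.1.1 * V p.1.2 p.2.2 * x p.2.1) * (Z p.1 ω * Z p.2 ω) := by
    intro ω
    simp only [Fintype.sum_prod_type]
    refine Finset.sum_congr rfl fun i₁ _ => ?_
    rw [Finset.sum_comm]
    exact Finset.sum_congr rfl fun j₁ _ => Finset.sum_congr rfl fun i₂ _ =>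
      Finset.sum_congr rfl fun j₂ _ => by ring
  have key : ∀ ω, (∑ i₁, ∑ i₂, ∑ j₁, ∑ j₂,
        x i₁ * Z (i₁, j₁) ω * V j₁ j₂ * Z (i₂, j₂) ω * x i₂) ^ 2
      = ∑ p : (Fin s × Fin q) × (Fin s × Fin q), ∑ p' : (Fin s × Fin q) × (Fin s × Fin q),
          ((x p.1.1 * V p.1.2 p.2.2 * x p.2.1) * (x p'.1.1 * V p'.1.2 p'.2.2 * x p'.2.1))
          * (Z p.1 ω * Z p.2 ω * Z p'.1 ω * Z p'.2 ω) := by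
    intro ω
    rw [hS ω, sq, Finset.sum_mul_sum]
    exact Finset.sum_congr rfl fun p _ => Finset.sum_congr rfl fun p' _ => by ring
  have ES : (∫ ω, (∑ i₁, ∑ i₂, ∑ j₁, ∑ j₂,
        x i₁ * Z (i₁, j₁) ω * V j₁ j₂ * Z (i₂, j₂) ω * x i₂) ^ 2 ∂(ℙ : Measure Ω))
      = ∑ p : (Fin s × Fin q) × (Fin s × Fin q), ∑ p' : (Fin s × Fin q) × (Fin s × Fin q),
          ((x p.1.1 * V p.1.2 p.2.2 * x p.2.1) * (x p'.1.1 * V p'.1.2 p'.2.2 * x p'.2.1))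
          * ((if p.1 = p.2 then (1:ℝ) else 0) * (if p'.1 = p'.2 then 1 else 0)
            + (if p.1 = p'.1 then (1:ℝ) else 0) * (if p.2 = p'.2 then 1 else 0)
            + (if p.1 = p'.2 then (1:ℝ) else 0) * (if p.2 = p'.1 then 1 else 0)) := by
    rw [show (fun ω => (∑ i₁, ∑ i₂, ∑ j₁, ∑ j₂,
        x i₁ * Z (i₁, j₁) ω * V j₁ j₂ * Z (i₂, j₂) ω * x i₂) ^ 2)
      = fun ω => ∑ p : (Fin s × Fin q) × (Fin s × Fin q),
          ∑ p' : (Fin s × Fin q) × (Fin s × Fin q),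
          ((x p.1.1 * V p.1.2 p.2.2 * x p.2.1) * (x p'.1.1 * V p'.1.2 p'.2.2 * x p'.2.1))
          * (Z p.1 ω * Z p.2 ω * Z p'.1 ω * Z p'.2 ω) from funext key]
    rw [integral_finset_sum _ (fun p _ => integrable_finset_sum _ (fun p' _ =>
      ((wick hmeas hindep hdist p.1 p.2 p'.1 p'.2).1.const_mul _)))]
    refine Finset.sum_congr rfl fun p _ => ?_
    rw [integral_finset_sum _ (fun p' _ =>
      ((wick hmeas hindep hdist p.1 p.2 p'.1 p'.2).1.const_mul _))]
    refine Finset.sum_congr rfl fun p' _ => ?_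
    rw [integral_const_mul, (wick hmeas hindep hdist p.1 p.2 p'.1 p'.2).2]
  have delta2 : ∀ p p' : (Fin s × Fin q) × (Fin s × Fin q),
      (if p.1 = p'.1 then (1:ℝ) else 0) * (if p.2 = p'.2 then 1 else 0)
      = if p = p' then 1 else 0 := by
    rintro ⟨a, b⟩ ⟨a', b'⟩
    by_cases h1 : a = a' <;> by_cases h2 : b = b' <;>
      simp [h1, h2, Prod.mk.injEq]
  have delta3 : ∀ p p' : (Fin s × Fin q) × (Fin s × Fin q),
      (if p.1 = p'.2 then (1:ℝ) else 0) * (if p.2 = p'.1 then 1 else 0)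
      = if (p.2, p.1) = p' then 1 else 0 := by
    rintro ⟨a, b⟩ ⟨a', b'⟩
    by_cases h1 : a = b' <;> by_cases h2 : b = a' <;>
      simp [h1, h2, Prod.mk.injEq]
  have hxx : (∑ i, x i ^ 2) = 1 := hx
  have T1 : ∑ p : (Fin s × Fin q) × (Fin s × Fin q),
        ∑ p' : (Fin s × Fin q) × (Fin s × Fin q),
        ((x p.1.1 * V p.1.2 p.2.2 * x p.2.1) * (x p'.1.1 * V p'.1.2 p'.2.2 * x p'.2.1))
        * ((if p.1 = p.2 then (1:ℝ) else 0) * (if p'.1 = p'.2 then 1 else 0))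
      = V.trace ^ 2 := by
    have h : ∀ p p' : (Fin s × Fin q) × (Fin s × Fin q),
        ((x p.1.1 * V p.1.2 p.2.2 * x p.2.1) * (x p'.1.1 * V p'.1.2 p'.2.2 * x p'.2.1))
        * ((if p.1 = p.2 then (1:ℝ) else 0) * (if p'.1 = p'.2 then 1 else 0))
        = ((x p.1.1 * V p.1.2 p.2.2 * x p.2.1) * (if p.1 = p.2 then (1:ℝ) else 0))
          * ((x p'.1.1 * V p'.1.2 p'.2.2 * x p'.2.1) * (if p'.1 = p'.2 then 1 else 0)) :=
      fun p p' => by ring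
    simp_rw [h]
    rw [← Finset.sum_mul_sum Finset.univ Finset.univ
      (fun p : (Fin s × Fin q) × (Fin s × Fin q) =>
        (x p.1.1 * V p.1.2 p.2.2 * x p.2.1) * (if p.1 = p.2 then (1:ℝ) else 0))
      (fun p' : (Fin s × Fin q) × (Fin s × Fin q) =>
        (x p'.1.1 * V p'.1.2 p'.2.2 * x p'.2.1) * (if p'.1 = p'.2 then (1:ℝ) else 0))]
    rw [alg_diag V x, hxx, one_mul, sq]
  have T2 : ∑ p : (Fin s × Fin q) × (Fin s × Fin q),
        ∑ p' : (Fin s × Fin q) × (Fin s × Fin q),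
        ((x p.1.1 * V p.1.2 p.2.2 * x p.2.1) * (x p'.1.1 * V p'.1.2 p'.2.2 * x p'.2.1))
        * ((if p.1 = p'.1 then (1:ℝ) else 0) * (if p.2 = p'.2 then 1 else 0))
      = ∑ j₁, ∑ j₂, (V j₁ j₂) ^ 2 := by
    simp_rw [delta2]
    simp only [mul_ite, mul_one, mul_zero, Finset.sum_ite_eq, Finset.mem_univ, if_true]
    rw [alg_sq V x, hxx]; ring
  have T3 : ∑ p : (Fin s × Fin q) × (Fin s × Fin q),
        ∑ p' : (Fin s × Fin q) × (Fin s × Fin q),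
        ((x p.1.1 * V p.1.2 p.2.2 * x p.2.1) * (x p'.1.1 * V p'.1.2 p'.2.2 * x p'.2.1))
        * ((if p.1 = p'.2 then (1:ℝ) else 0) * (if p.2 = p'.1 then 1 else 0))
      = ∑ j₁, ∑ j₂, (V j₁ j₂) ^ 2 := by
    simp_rw [delta3]
    simp only [mul_ite, mul_one, mul_zero, Finset.sum_ite_eq, Finset.mem_univ, if_true]
    rw [alg_sym V x hV, hxx]; ring
  have EXACT : (∫ ω, (∑ i₁, ∑ i₂, ∑ j₁, ∑ j₂,
        x i₁ * Z (i₁, j₁) ω * V j₁ j₂ * Z (i₂, j₂) ω * x i₂) ^ 2 ∂(ℙ : Measure Ω))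
      = V.trace ^ 2 + 2 * (∑ j₁, ∑ j₂, (V j₁ j₂) ^ 2) := by
    rw [ES]
    simp only [mul_add, Finset.sum_add_distrib]
    rw [T1, T2, T3]; ring
  have hF : (0:ℝ) ≤ ∑ j₁, ∑ j₂, (V j₁ j₂) ^ 2 :=
    Finset.sum_nonneg fun _ _ => Finset.sum_nonneg fun _ _ => sq_nonneg _
  have hdiag : (0:ℝ) ≤ ∑ j, (V j j) ^ 2 := Finset.sum_nonneg fun _ _ => sq_nonneg _
  have hx4 : (0:ℝ) ≤ ∑ i, (x i) ^ 4 := Finset.sum_nonneg fun _ _ => by positivity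
  have hx41 : (∑ i, (x i) ^ 4) ≤ 1 := by
    calc (∑ i, (x i) ^ 4) ≤ (∑ i, x i ^ 2) ^ 2 := by
          rw [sq, Finset.sum_mul_sum Finset.univ Finset.univ
            (fun i => x i ^ 2) (fun i => x i ^ 2)]
          refine Finset.sum_le_sum fun i _ => ?_
          calc (x i) ^ 4 = x i ^ 2 * x i ^ 2 := by ring
            _ ≤ ∑ j, x i ^ 2 * x j ^ 2 :=
                Finset.single_le_sum (f := fun j => x i ^ 2 * x j ^ 2)
                  (fun j _ => by positivity) (Finset.mem_univ i)
      _ = 1 := by rw [hxx]; norm_num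
  have hdF : (∑ j, (V j j) ^ 2) ≤ ∑ j₁, ∑ j₂, (V j₁ j₂) ^ 2 := by
    refine Finset.sum_le_sum fun j _ => ?_
    exact Finset.single_le_sum (f := fun j₂ => V j j₂ ^ 2) (fun _ _ => sq_nonneg _)
      (Finset.mem_univ j)
  refine ⟨?_, ?_, ?_⟩
  · rw [EXACT]
    nlinarith [mul_nonneg hdiag hx4]
  · have h5 : (∑ j, (V j j) ^ 2) * (∑ i, (x i) ^ 4) ≤ (∑ j₁, ∑ j₂, (V j₁ j₂) ^ 2) * 1 :=
      mul_le_mul hdF hx41 hx4 hF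
    nlinarith
  · rw [EXACT]; nlinarith

end Main
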